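/- In the classical case (κ = 0, so O_1 = O_2 = O_3 = 0), the element O_{123} := −(ε/2)e_1e_2e_3 + O_{12}e_3 + O_{31}e_2 + O_{23}e_1 with O_{ij} = L_{ij} + (ε/2)e_ie_j satisfies O_{123}² = −ε/4 + ε(O_{12}² + O_{31}² + O_{23}²). -/

import Mathlib

open MvPolynomial TensorProduct

lemma pd_comm (i j : Fin 3) (p : MvPolynomial (Fin 3) ℂ) :
    pderiv i (pderiv j p) = pderiv j (pderiv i p) := by
  induction p using MvPolynomial.induction_on' with
  | monomial s a =>
    rcases eq_or_ne i j with h | h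
    · rw [h]
    · simp [pderiv_monomial, Finsupp.single_apply, h, h.symm, tsub_right_comm]
      ring_nf
  | add p q hp hq => simp [hp, hq]

noncomputable def LL (a b : Fin 3) : Module.End ℂ (MvPolynomial (Fin 3) ℂ) :=
  LinearMap.mulLeft ℂ (X a) * (pderiv b).toLinearMap
    - LinearMap.mulLeft ℂ (X b) * (pderiv a).toLinearMap

lemma Lcomm (u v w : Fin 3) (huv : u ≠ v) (hvw : v ≠ w) (huw : u ≠ w) :
    LL u v * LL w u - LL w u * LL u v = LL v w := by
  apply LinearMap.ext; intro p
  simp only [LL, LinearMap.sub_apply, Module.End.mul_apply, LinearMap.mulLeft_apply,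
    Derivation.coeFn_coe, map_sub, pderiv_mul,
    pderiv_X_self, pderiv_X_of_ne huv, pderiv_X_of_ne huv.symm,
    pderiv_X_of_ne hvw, pderiv_X_of_ne hvw.symm,
    pderiv_X_of_ne huw, pderiv_X_of_ne huw.symm]
  rw [pd_comm v u p, pd_comm w u p, pd_comm w v p]
  ring

lemma key {A : Type*} [Ring A] [Algebra ℂ A] (ε : ℂ) (hε : ε = 1 ∨ ε = -1)
    (a b c f0 f1 f2 : A)
    (hab : a * b - b * a = c) (hca : c * a - a * c = b) (hbc : b * c - c * b = a)
    (hsq0 : f0 * f0 = ε • 1) (hsq1 : f1 * f1 = ε • 1) (hsq2 : f2 * f2 = ε • 1)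
    (h10 : f1 * f0 = -(f0 * f1)) (h20 : f2 * f0 = -(f0 * f2)) (h21 : f2 * f1 = -(f1 * f2))
    (h0a : f0 * a = a * f0) (h0b : f0 * b = b * f0) (h0c : f0 * c = c * f0)
    (h1a : f1 * a = a * f1) (h1b : f1 * b = b * f1) (h1c : f1 * c = c * f1)
    (h2a : f2 * a = a * f2) (h2b : f2 * b = b * f2) (h2c : f2 * c = c * f2) :
    ((-(ε / 2)) • (f0 * f1 * f2)
        + (a + (ε / 2) • (f0 * f1)) * f2 + (b + (ε / 2) • (f2 * f0)) * f1
        + (c + (ε / 2) • (f1 * f2)) * f0) ^ 2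
      = (-(ε / 4)) • (1 : A)
        + ε • ((a + (ε / 2) • (f0 * f1)) ^ 2 + (b + (ε / 2) • (f2 * f0)) ^ 2
            + (c + (ε / 2) • (f1 * f2)) ^ 2) := by
  have hba : b * a = a * b - c := by rw [← hab]; abel
  have hcb : c * b = b * c - a := by rw [← hbc]; abel
  have hca' : c * a = a * c + b := by rw [← hca]; abel
  have hba' : ∀ y : A, b * (a * y) = a * (b * y) - c * y := fun y => by
    rw [← mul_assoc, hba, sub_mul, mul_assoc]
  have hcb' : ∀ y : A, c * (b * y) = b * (c * y) - a * y := fun y => by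
    rw [← mul_assoc, hcb, sub_mul, mul_assoc]
  have hca'' : ∀ y : A, c * (a * y) = a * (c * y) + b * y := fun y => by
    rw [← mul_assoc, hca', add_mul, mul_assoc]
  have h10' : ∀ y : A, f1 * (f0 * y) = -(f0 * (f1 * y)) := fun y => by
    rw [← mul_assoc, h10, neg_mul, mul_assoc]
  have h20' : ∀ y : A, f2 * (f0 * y) = -(f0 * (f2 * y)) := fun y => by
    rw [← mul_assoc, h20, neg_mul, mul_assoc]
  have h21' : ∀ y : A, f2 * (f1 * y) = -(f1 * (f2 * y)) := fun y => by
    rw [← mul_assoc, h21, neg_mul, mul_assoc]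
  have hsq0' : ∀ y : A, f0 * (f0 * y) = ε • y := fun y => by
    rw [← mul_assoc, hsq0, smul_mul_assoc, one_mul]
  have hsq1' : ∀ y : A, f1 * (f1 * y) = ε • y := fun y => by
    rw [← mul_assoc, hsq1, smul_mul_assoc, one_mul]
  have hsq2' : ∀ y : A, f2 * (f2 * y) = ε • y := fun y => by
    rw [← mul_assoc, hsq2, smul_mul_assoc, one_mul]
  have h0a' : ∀ y : A, f0 * (a * y) = a * (f0 * y) := fun y => by
    rw [← mul_assoc, h0a, mul_assoc]
  have h0b' : ∀ y : A, f0 * (b * y) = b * (f0 * y) := fun y => by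
    rw [← mul_assoc, h0b, mul_assoc]
  have h0c' : ∀ y : A, f0 * (c * y) = c * (f0 * y) := fun y => by
    rw [← mul_assoc, h0c, mul_assoc]
  have h1a' : ∀ y : A, f1 * (a * y) = a * (f1 * y) := fun y => by
    rw [← mul_assoc, h1a, mul_assoc]
  have h1b' : ∀ y : A, f1 * (b * y) = b * (f1 * y) := fun y => by
    rw [← mul_assoc, h1b, mul_assoc]
  have h1c' : ∀ y : A, f1 * (c * y) = c * (f1 * y) := fun y => by
    rw [← mul_assoc, h1c, mul_assoc]
  have h2a' : ∀ y : A, f2 * (a * y) = a * (f2 * y) := fun y => by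
    rw [← mul_assoc, h2a, mul_assoc]
  have h2b' : ∀ y : A, f2 * (b * y) = b * (f2 * y) := fun y => by
    rw [← mul_assoc, h2b, mul_assoc]
  have h2c' : ∀ y : A, f2 * (c * y) = c * (f2 * y) := fun y => by
    rw [← mul_assoc, h2c, mul_assoc]
  obtain rfl | rfl := hε <;>
  · simp only [pow_two, mul_add, add_mul, mul_sub, sub_mul, smul_mul_assoc, mul_smul_comm,
      mul_assoc, smul_add, smul_sub, smul_smul, smul_neg, neg_smul, neg_mul, mul_neg, neg_neg,
      mul_one, one_mul, one_smul,
      hba, hcb, hca', hba', hcb', hca'', h10, h20, h21, h10', h20', h21',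
      hsq0, hsq1, hsq2, hsq0', hsq1', hsq2',
      h0a, h0b, h0c, h1a, h1b, h1c, h2a, h2b, h2c,
      h0a', h0b', h0c', h1a', h1b', h1c', h2a', h2b', h2c']
    module

theorem stmt19 {Cl : Type*} [Ring Cl] [Algebra ℂ Cl] (ε : ℂ) (hε : ε = 1 ∨ ε = -1)
    (e : Fin 3 → Cl)
    (hrel : ∀ i j, e i * e j + e j * e i = (2 * ε * (if i = j then 1 else 0)) • (1 : Cl)) :
    let L : Fin 3 → Fin 3 → Module.End ℂ (MvPolynomial (Fin 3) ℂ) := fun a b =>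
      LinearMap.mulLeft ℂ (X a) * (pderiv b).toLinearMap
        - LinearMap.mulLeft ℂ (X b) * (pderiv a).toLinearMap
    let one : Module.End ℂ (MvPolynomial (Fin 3) ℂ) := 1
    let O : Fin 3 → Fin 3 → (Module.End ℂ (MvPolynomial (Fin 3) ℂ) ⊗[ℂ] Cl) := fun a b =>
      L a b ⊗ₜ[ℂ] (1 : Cl) + (ε / 2) • (one ⊗ₜ[ℂ] (e a * e b))
    let O123 : Module.End ℂ (MvPolynomial (Fin 3) ℂ) ⊗[ℂ] Cl :=
      (-(ε / 2)) • (one ⊗ₜ[ℂ] (e 0 * e 1 * e 2))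
        + O 0 1 * (one ⊗ₜ[ℂ] e 2) + O 2 0 * (one ⊗ₜ[ℂ] e 1) + O 1 2 * (one ⊗ₜ[ℂ] e 0)
    O123 ^ 2 = (-(ε / 4)) • (1 : Module.End ℂ (MvPolynomial (Fin 3) ℂ) ⊗[ℂ] Cl)
        + ε • ((O 0 1) ^ 2 + (O 2 0) ^ 2 + (O 1 2) ^ 2) := by
  intro L one O O123
  have hL : L = LL := rfl
  -- Clifford facts
  have e_sq : ∀ i, e i * e i = ε • (1 : Cl) := by
    intro i
    have h := hrel i i
    simp only [if_pos rfl, if_true, mul_one] at h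
    have h2 : (2 : ℂ) • (e i * e i) = (2 : ℂ) • (ε • (1 : Cl)) := by
      rw [two_smul, h, smul_smul]
    exact smul_right_injective Cl two_ne_zero h2
  have e_anti : ∀ i j : Fin 3, i ≠ j → e i * e j = -(e j * e i) := by
    intro i j hij
    have h := hrel i j
    rw [if_neg hij] at h
    simp only [mul_zero, zero_smul] at h
    exact eq_neg_of_add_eq_zero_left h
  have hmain := key ε hε (LL 0 1 ⊗ₜ[ℂ] (1 : Cl)) (LL 2 0 ⊗ₜ[ℂ] (1 : Cl)) (LL 1 2 ⊗ₜ[ℂ] (1 : Cl))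
      ((1 : Module.End ℂ (MvPolynomial (Fin 3) ℂ)) ⊗ₜ[ℂ] e 0)
      ((1 : Module.End ℂ (MvPolynomial (Fin 3) ℂ)) ⊗ₜ[ℂ] e 1)
      ((1 : Module.End ℂ (MvPolynomial (Fin 3) ℂ)) ⊗ₜ[ℂ] e 2)
      (by simp only [Algebra.TensorProduct.tmul_mul_tmul, mul_one]
          rw [← TensorProduct.sub_tmul, Lcomm 0 1 2 (by decide) (by decide) (by decide)])
      (by simp only [Algebra.TensorProduct.tmul_mul_tmul, mul_one]
          rw [← TensorProduct.sub_tmul, Lcomm 1 2 0 (by decide) (by decide) (by decide)])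
      (by simp only [Algebra.TensorProduct.tmul_mul_tmul, mul_one]
          rw [← TensorProduct.sub_tmul, Lcomm 2 0 1 (by decide) (by decide) (by decide)])
      (by simp only [Algebra.TensorProduct.tmul_mul_tmul, one_mul, e_sq 0,
            TensorProduct.tmul_smul, Algebra.TensorProduct.one_def])
      (by simp only [Algebra.TensorProduct.tmul_mul_tmul, one_mul, e_sq 1,
            TensorProduct.tmul_smul, Algebra.TensorProduct.one_def])
      (by simp only [Algebra.TensorProduct.tmul_mul_tmul, one_mul, e_sq 2,
            TensorProduct.tmul_smul, Algebra.TensorProduct.one_def])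
      (by simp only [Algebra.TensorProduct.tmul_mul_tmul, one_mul,
            e_anti 1 0 (by decide), TensorProduct.tmul_neg])
      (by simp only [Algebra.TensorProduct.tmul_mul_tmul, one_mul,
            e_anti 2 0 (by decide), TensorProduct.tmul_neg])
      (by simp only [Algebra.TensorProduct.tmul_mul_tmul, one_mul,
            e_anti 2 1 (by decide), TensorProduct.tmul_neg])
      (by simp only [Algebra.TensorProduct.tmul_mul_tmul, one_mul, mul_one])
      (by simp only [Algebra.TensorProduct.tmul_mul_tmul, one_mul, mul_one])
      (by simp only [Algebra.TensorProduct.tmul_mul_tmul, one_mul, mul_one])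
      (by simp only [Algebra.TensorProduct.tmul_mul_tmul, one_mul, mul_one])
      (by simp only [Algebra.TensorProduct.tmul_mul_tmul, one_mul, mul_one])
      (by simp only [Algebra.TensorProduct.tmul_mul_tmul, one_mul, mul_one])
      (by simp only [Algebra.TensorProduct.tmul_mul_tmul, one_mul, mul_one])
      (by simp only [Algebra.TensorProduct.tmul_mul_tmul, one_mul, mul_one])
      (by simp only [Algebra.TensorProduct.tmul_mul_tmul, one_mul, mul_one])
  have ht : ∀ x y : Cl, (1 : Module.End ℂ (MvPolynomial (Fin 3) ℂ)) ⊗ₜ[ℂ] (x * y)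
      = ((1 : Module.End ℂ (MvPolynomial (Fin 3) ℂ)) ⊗ₜ[ℂ] x)
        * ((1 : Module.End ℂ (MvPolynomial (Fin 3) ℂ)) ⊗ₜ[ℂ] y) := by
    intro x y
    rw [Algebra.TensorProduct.tmul_mul_tmul, one_mul]
  simp only [O123, O, one, hL, ht]
  exact hmain
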